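/- Let H be a real inner product space. For any s, t ∈ [0,1] and any x, y, z, w ∈ H, 0 ≤ (1−s)(1−t)‖x−y‖² + s(1−t)‖y−z‖² + s·t·‖z−w‖² + (1−s)t·‖w−x‖² − s(1−s)‖x−z‖² − t(1−t)‖y−w‖². -/
import Mathlib

theorem boxtimes_ineq {H : Type*} [NormedAddCommGroup H] [InnerProductSpace ℝ H]
    (s t : ℝ) (hs0 : 0 ≤ s) (hs1 : s ≤ 1) (ht0 : 0 ≤ t) (ht1 : t ≤ 1)
    (x y z w : H) :
    0 ≤ (1 - s) * (1 - t) * ‖x - y‖ ^ 2 + s * (1 - t) * ‖y - z‖ ^ 2 +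
        s * t * ‖z - w‖ ^ 2 + (1 - s) * t * ‖w - x‖ ^ 2 -
        s * (1 - s) * ‖x - z‖ ^ 2 - t * (1 - t) * ‖y - w‖ ^ 2 := by
  have key : (1 - s) * (1 - t) * ‖x - y‖ ^ 2 + s * (1 - t) * ‖y - z‖ ^ 2 +
        s * t * ‖z - w‖ ^ 2 + (1 - s) * t * ‖w - x‖ ^ 2 -
        s * (1 - s) * ‖x - z‖ ^ 2 - t * (1 - t) * ‖y - w‖ ^ 2
      = ‖(1 - s) • x - (1 - t) • y + s • z - t • w‖ ^ 2 := by
    simp only [← real_inner_self_eq_norm_sq, inner_sub_left, inner_sub_right,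
      inner_add_left, inner_add_right, inner_smul_left, inner_smul_right,
      RCLike.ofReal_real_eq_id, id_eq, starRingEnd_apply, star_trivial]
    rw [real_inner_comm y x, real_inner_comm z y, real_inner_comm w z,
      real_inner_comm x w, real_inner_comm z x, real_inner_comm w y]
    ring
  rw [key]
  positivity
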